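/- Assume (C1), (C2), (C3), (C4), that max_{[0,1]} f' < inf_Ω 𝒥^δ, and that J ∈ 𝔹^α_{1,∞}(Ω;δ) for some α ∈ (0,1). Let u(t,x) be the unique entire solution of ∂_t u = Lu + f(u) on ℝ × closure(Ω) with 0 < u < 1, ∂_t u > 0 and |u(t,x) − φ(x₁ + ct)| → 0 as t → −∞ uniformly in x ∈ closure(Ω). Then, writing x = (x₁, x') ∈ ℝ × ℝ^{N−1}, for every fixed (t, x') ∈ ℝ × ℝ^{N−1} one has u(t,x) → 0 as x₁ → −∞ and u(t,x) → 1 as x₁ → +∞. -/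

import Mathlib

open MeasureTheory Filter Topology Set RealInnerProductSpace

noncomputable section

abbrev Euc (N : ℕ) := EuclideanSpace ℝ (Fin N)

/-- The nonlocal diffusion operator `Lu(x) = ∫_Ω J(δ(x,y)) (u(y) - u(x)) dy`. -/
def nlOp {N : ℕ} (Ω : Set (Euc N)) (J : ℝ → ℝ)
    (δ : Euc N → Euc N → ℝ) (u : Euc N → ℝ) (x : Euc N) : ℝ :=
  ∫ y in Ω, J (δ x y) * (u y - u x)

/-- First coordinate of a point of `ℝ^N`. -/
def coord1 {N : ℕ} (hN : 0 < N) (x : Euc N) : ℝ := x ⟨0, hN⟩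

/-- Build a point of `ℝ^N` from a first coordinate and a point of `ℝ^{N-1}`. -/
def withFirst (N : ℕ) (s : ℝ) (x' : Euc (N - 1)) : Euc N := WithLp.toLp 2 fun i : Fin N =>
  if h : (i : ℕ) = 0 then s else x' ⟨(i : ℕ) - 1, by have := i.isLt; omega⟩

/-- A quasi-Euclidean distance on a set `E ⊆ ℝ^N`. -/
structure IsQuasiEuclidean {N : ℕ} (E : Set (Euc N)) (δ : Euc N → Euc N → ℝ) : Prop where
  symm : ∀ x ∈ E, ∀ y ∈ E, δ x y = δ y x
  eq_zero_iff : ∀ x ∈ E, ∀ y ∈ E, (δ x y = 0 ↔ x = y)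
  triangle : ∀ x ∈ E, ∀ y ∈ E, ∀ z ∈ E, δ x z ≤ δ x y + δ y z
  eq_of_segment : ∀ x ∈ E, ∀ y ∈ E, segment ℝ x y ⊆ E → δ x y = ‖x - y‖
  ge_eucl : ∀ x ∈ E, ∀ y ∈ E, ‖x - y‖ ≤ δ x y

/-- `δ` coincides with the Euclidean distance on `E`. -/
def IsEuclideanOn {N : ℕ} (E : Set (Euc N)) (δ : Euc N → Euc N → ℝ) : Prop :=
  ∀ x ∈ E, ∀ y ∈ E, δ x y = ‖x - y‖

/-- Hypothesis (C1): `K` compact, `Ω = ℝ^N \ K` connected, `δ` quasi-Euclidean on `closure Ω`. -/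
structure C1 {N : ℕ} (K : Set (Euc N)) (δ : Euc N → Euc N → ℝ) : Prop where
  cpt : IsCompact K
  conn : IsConnected Kᶜ
  quasi : IsQuasiEuclidean (closure Kᶜ) δ

/-- Hypothesis (C2): `f` is a bistable nonlinearity with derivative `f'`. -/
structure C2 (f f' : ℝ → ℝ) (θ : ℝ) : Prop where
  θ_mem : θ ∈ Ioo (0:ℝ) 1
  f0 : f 0 = 0
  fθ : f θ = 0
  f1 : f 1 = 0
  neg_on : ∀ s ∈ Ioo 0 θ, f s < 0
  pos_on : ∀ s ∈ Ioo θ 1, 0 < f s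
  hasDeriv : ∀ s ∈ Icc (0:ℝ) 1, HasDerivAt f (f' s) s
  lipschitz_deriv : ∃ C : NNReal, LipschitzOnWith C f' (Icc 0 1)
  d0 : f' 0 < 0
  dθ : 0 < f' θ
  d1 : f' 1 < 0

/-- The iterated sets `Π_j(J,x)`. -/
def PiIter {N : ℕ} (Ω : Set (Euc N)) (J : ℝ → ℝ)
    (δ : Euc N → Euc N → ℝ) (x : Euc N) : ℕ → Set (Euc N)
  | 0 => {x}
  | j + 1 => ⋃ z ∈ PiIter Ω J δ x j, (closure Ω ∩ Function.support fun y => J (δ y z))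

/-- The `J`-covering property of `(Ω, δ)`. -/
def JCovering {N : ℕ} (Ω : Set (Euc N)) (J : ℝ → ℝ) (δ : Euc N → Euc N → ℝ) : Prop :=
  ∀ x ∈ closure Ω, closure Ω = ⋃ j, PiIter Ω J δ x j

/-- Hypothesis (C3) on the kernel `J`. -/
structure C3 {N : ℕ} (Ω : Set (Euc N)) (J : ℝ → ℝ) (δ : Euc N → Euc N → ℝ) : Prop where
  nonneg : ∀ r, 0 ≤ J r
  meas : Measurable J
  cptSupp : ∃ R : ℝ, Function.support J ⊆ Icc 0 R
  suppPos : 0 < volume (Function.support J)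
  covering : JCovering Ω J δ
  unitMass : (∫ z : Euc N, J ‖z‖) = 1
  l1cont : ∀ x₁ ∈ closure Ω,
      Tendsto (fun x₂ : Euc N => ∫ y in Ω, |J (δ x₂ y) - J (δ x₁ y)|) (𝓝[closure Ω] x₁) (𝓝 0)
  jdeltaBdd : ∃ C : ℝ, ∀ x ∈ Ω, (∫ z in Ω, J (δ x z)) ≤ C

/-- The one-dimensional kernel `J₁(z) = ∫_{ℝ^{N-1}} J(|(z,y')|) dy'`. -/
def J1 (N : ℕ) (J : ℝ → ℝ) : ℝ → ℝ :=
  fun z => ∫ y' : Euc (N - 1), J (Real.sqrt (z ^ 2 + ‖y'‖ ^ 2))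

/-- Hypothesis (C4): `(φ, c)` is an increasing planar travelling wave profile. -/
structure C4 (N : ℕ) (J f : ℝ → ℝ) (φ φ' : ℝ → ℝ) (c : ℝ) : Prop where
  cpos : 0 < c
  mono : StrictMono φ
  hasDeriv : ∀ z, HasDerivAt φ (φ' z) z
  eqn : ∀ z, c * φ' z = (∫ h : ℝ, J1 N J h * φ (z - h)) - φ z + f (φ z)
  lim0 : Tendsto φ atBot (𝓝 (0:ℝ))
  lim1 : Tendsto φ atTop (𝓝 (1:ℝ))

/-- `z ↦ J(|z|)` belongs to `W^{1,1}(ℝ^N)` (weak-derivative formulation). -/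
def MemW11 (N : ℕ) (J : ℝ → ℝ) : Prop :=
  Integrable (fun z : Euc N => J ‖z‖) ∧
  ∃ g : Euc N → Euc N,
    Integrable (fun z => ‖g z‖) ∧
    ∀ ψ : Euc N → ℝ, ContDiff ℝ (⊤ : ℕ∞) ψ → HasCompactSupport ψ →
      ∀ v : Euc N, (∫ z, J ‖z‖ * fderiv ℝ ψ z v) = -∫ z, ψ z * ⟪g z, v⟫

/-- Hypothesis (C5). -/
structure C5 (N : ℕ) (J f f' : ℝ → ℝ) : Prop where
  w11 : MemW11 N J
  maxderiv : ∀ s ∈ Icc (0:ℝ) 1, f' s < 1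
  posmass : 0 < ∫ s in (0:ℝ)..1, f s

/-- `g ∈ 𝔹^α_{1,∞}(Ω;δ)`. -/
def MemBesov {N : ℕ} (Ω : Set (Euc N)) (δ : Euc N → Euc N → ℝ) (α : ℝ) (g : ℝ → ℝ) : Prop :=
  Integrable (fun z : Euc N => g ‖z‖) ∧
  ∃ C : ℝ, ∀ x₁ ∈ Ω, ∀ x₂ ∈ Ω, x₁ ≠ x₂ →
    (∫ y in Ω, |g (δ x₁ y) - g (δ x₂ y)|) ≤ C * ‖x₁ - x₂‖ ^ α

/-- `max_{[0,1]} f' < inf_Ω 𝒥^δ`. -/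
def FJCond {N : ℕ} (Ω : Set (Euc N)) (J f' : ℝ → ℝ) (δ : Euc N → Euc N → ℝ) : Prop :=
  ∃ m : ℝ, (∀ s ∈ Icc (0:ℝ) 1, f' s < m) ∧ ∀ x ∈ Ω, m ≤ ∫ z in Ω, J (δ x z)

/-- `max_ℝ f' < inf_Ω 𝒥^δ`. -/
def FJCondAll {N : ℕ} (Ω : Set (Euc N)) (J f' : ℝ → ℝ) (δ : Euc N → Euc N → ℝ) : Prop :=
  ∃ m : ℝ, (∀ s : ℝ, f' s < m) ∧ ∀ x ∈ Ω, m ≤ ∫ z in Ω, J (δ x z)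

/-- `u` is an entire (classical) solution of `∂ₜ u = Lu + f(u)` on `ℝ × closure Ω`. -/
def EntireSol {N : ℕ} (Ω : Set (Euc N)) (J : ℝ → ℝ) (δ : Euc N → Euc N → ℝ)
    (f : ℝ → ℝ) (u : ℝ → Euc N → ℝ) : Prop :=
  ∀ t : ℝ, ∀ x ∈ closure Ω, HasDerivAt (fun s => u s x) (nlOp Ω J δ (u t) x + f (u t x)) t

/-- `u` is bounded on `ℝ × closure Ω`. -/
def BoundedOn {N : ℕ} (Ω : Set (Euc N)) (u : ℝ → Euc N → ℝ) : Prop :=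
  ∃ M : ℝ, ∀ t : ℝ, ∀ x ∈ closure Ω, |u t x| ≤ M

/-- `u ∈ C²(ℝ, C^{0,α}(closure Ω))`. -/
def TimeC2SpaceHolder {N : ℕ} (Ω : Set (Euc N)) (α : ℝ) (u : ℝ → Euc N → ℝ) : Prop :=
  (∀ x ∈ closure Ω, ContDiff ℝ 2 fun t => u t x) ∧
  ∀ t : ℝ, ∃ C : ℝ, ∀ x ∈ closure Ω, ∀ y ∈ closure Ω, |u t x - u t y| ≤ C * ‖x - y‖ ^ α

/-- `0 < u < 1` on `ℝ × closure Ω`. -/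
def StrictBetween01 {N : ℕ} (Ω : Set (Euc N)) (u : ℝ → Euc N → ℝ) : Prop :=
  ∀ t : ℝ, ∀ x ∈ closure Ω, 0 < u t x ∧ u t x < 1

/-- `∂ₜ u > 0` on `ℝ × closure Ω`. -/
def TimeStrictMono {N : ℕ} (Ω : Set (Euc N)) (u : ℝ → Euc N → ℝ) : Prop :=
  ∀ t : ℝ, ∀ x ∈ closure Ω, 0 < deriv (fun s => u s x) t

/-- `|u(t,x) - φ(x₁ + c t)| → 0` as `t → -∞`, uniformly in `x ∈ closure Ω`. -/
def UnifWaveLimitAtBot {N : ℕ} (hN : 0 < N) (Ω : Set (Euc N)) (φ : ℝ → ℝ) (c : ℝ)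
    (u : ℝ → Euc N → ℝ) : Prop :=
  ∀ ε > 0, ∃ T : ℝ, ∀ t ≤ T, ∀ x ∈ closure Ω, |u t x - φ (coord1 hN x + c * t)| ≤ ε

/-- `|u(t,x) - φ(x₁ + c t)| → 0` as `t → -∞`, locally uniformly in `x ∈ closure Ω`. -/
def LocWaveLimitAtBot {N : ℕ} (hN : 0 < N) (Ω : Set (Euc N)) (φ : ℝ → ℝ) (c : ℝ)
    (u : ℝ → Euc N → ℝ) : Prop :=
  ∀ ε > 0, ∀ R : ℝ, ∃ T : ℝ, ∀ t ≤ T, ∀ x ∈ closure Ω, ‖x‖ ≤ R →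
    |u t x - φ (coord1 hN x + c * t)| ≤ ε

/-- `|u(t,x) - φ(x₁ + c t)| → 0` as `t → +∞`, locally uniformly in `x ∈ closure Ω`. -/
def LocWaveLimitAtTop {N : ℕ} (hN : 0 < N) (Ω : Set (Euc N)) (φ : ℝ → ℝ) (c : ℝ)
    (u : ℝ → Euc N → ℝ) : Prop :=
  ∀ ε > 0, ∀ R : ℝ, ∃ T : ℝ, ∀ t ≥ T, ∀ x ∈ closure Ω, ‖x‖ ≤ R →
    |u t x - φ (coord1 hN x + c * t)| ≤ ε

/-- `|u(t,x) - w(x) φ(x₁ + c t)| → 0` as `t → +∞`, locally uniformly in `x ∈ closure Ω`. -/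
def LocProdLimitAtTop {N : ℕ} (hN : 0 < N) (Ω : Set (Euc N)) (φ : ℝ → ℝ) (c : ℝ)
    (w : Euc N → ℝ) (u : ℝ → Euc N → ℝ) : Prop :=
  ∀ ε > 0, ∀ R : ℝ, ∃ T : ℝ, ∀ t ≥ T, ∀ x ∈ closure Ω, ‖x‖ ≤ R →
    |u t x - w x * φ (coord1 hN x + c * t)| ≤ ε

/-- `w` solves the stationary problem (P∞): `Lw + f(w) = 0` in `closure Ω`,
`0 < w ≤ 1`, and `w(x) → 1` as `|x| → ∞`. -/
def StationarySol {N : ℕ} (Ω : Set (Euc N)) (J : ℝ → ℝ) (δ : Euc N → Euc N → ℝ)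
    (f : ℝ → ℝ) (w : Euc N → ℝ) : Prop :=
  ContinuousOn w (closure Ω) ∧
  (∀ x ∈ closure Ω, nlOp Ω J δ w x + f (w x) = 0) ∧
  (∀ x ∈ closure Ω, 0 < w x ∧ w x ≤ 1) ∧
  ∀ ε > 0, ∃ R : ℝ, ∀ x ∈ closure Ω, R ≤ ‖x‖ → |w x - 1| ≤ ε

/-- Regularity `u ∈ C²([t₀,∞), C(Ω))` of a solution of the Cauchy problem,
with time-derivatives `u'`, `u''`. -/
def CauchyReg {N : ℕ} (Ω : Set (Euc N)) (t₀ : ℝ) (u u' u'' : ℝ → Euc N → ℝ) : Prop :=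
  (∀ x ∈ Ω, ∀ t ∈ Ici t₀, HasDerivWithinAt (fun s => u s x) (u' t x) (Ici t₀) t) ∧
  (∀ x ∈ Ω, ∀ t ∈ Ici t₀, HasDerivWithinAt (fun s => u' s x) (u'' t x) (Ici t₀) t) ∧
  (∀ x ∈ Ω, ContinuousOn (fun s => u'' s x) (Ici t₀)) ∧
  ∀ t ∈ Ici t₀, ContinuousOn (u t) Ω

/-- `u` solves the Cauchy problem with initial datum `u₀` at time `t₀`. -/
def CauchySol {N : ℕ} (Ω : Set (Euc N)) (J : ℝ → ℝ) (δ : Euc N → Euc N → ℝ)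
    (f : ℝ → ℝ) (t₀ : ℝ) (u₀ : Euc N → ℝ) (u u' : ℝ → Euc N → ℝ) : Prop :=
  (∀ t ∈ Ici t₀, ∀ x ∈ Ω, u' t x = nlOp Ω J δ (u t) x + f (u t x)) ∧
  ∀ x ∈ Ω, u t₀ x = u₀ x

end

lemma abs_coord_le_norm {N : ℕ} (x : Euc N) (i : Fin N) : |x i| ≤ ‖x‖ := by
  rw [EuclideanSpace.norm_eq, ← Real.sqrt_sq_eq_abs]
  apply Real.sqrt_le_sqrt
  simpa using Finset.single_le_sum (f := fun j => (x j) ^ 2)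
    (fun j _ => sq_nonneg _) (Finset.mem_univ i)

/-- Sup of `u t` over the far-left region `{x₁ ≤ A₀ - n}`. -/
noncomputable def auxS {N : ℕ} (hN : 0 < N) (Ω : Set (Euc N)) (u : ℝ → Euc N → ℝ)
    (A₀ : ℝ) (t : ℝ) (n : ℕ) : ℝ :=
  sSup (u t '' {x | x ∈ closure Ω ∧ coord1 hN x ≤ A₀ - n})

/-- Uniform limsup of `u t` as `x₁ → -∞`. -/
noncomputable def auxm {N : ℕ} (hN : 0 < N) (Ω : Set (Euc N)) (u : ℝ → Euc N → ℝ)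
    (A₀ : ℝ) (t : ℝ) : ℝ :=
  ⨅ n : ℕ, auxS hN Ω u A₀ t n

set_option maxHeartbeats 1600000 in
/-- Proposition 5.5: limits of the entire solution as `x₁ → ±∞`. -/
theorem limits_in_first_coordinate
    {N : ℕ} (hN : 0 < N) (K Ω : Set (Euc N)) (hΩ : Ω = Kᶜ)
    (δ : Euc N → Euc N → ℝ) (J f f' : ℝ → ℝ) (θ : ℝ)
    (φ φ' : ℝ → ℝ) (c : ℝ) (α : ℝ) (hα : α ∈ Set.Ioo (0:ℝ) 1)
    (h1 : C1 K δ) (h2 : C2 f f' θ) (h3 : C3 Ω J δ) (h4 : C4 N J f φ φ' c)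
    (hB : MemBesov Ω δ α J) (hfJ : FJCond Ω J f' δ)
    (u : ℝ → Euc N → ℝ)
    (hu : EntireSol Ω J δ f u)
    (hu01 : StrictBetween01 Ω u)
    (hmono : TimeStrictMono Ω u)
    (hulim : UnifWaveLimitAtBot hN Ω φ c u) :
    ∀ t : ℝ, ∀ x' : Euc (N - 1),
      Filter.Tendsto (fun s => u t (withFirst N s x')) Filter.atBot (nhds 0) ∧
      Filter.Tendsto (fun s => u t (withFirst N s x')) Filter.atTop (nhds 1) := by
  subst hΩ
  -- basic geometric setup
  have hKcl : IsClosed K := h1.cpt.isClosed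
  have hΩmeas : MeasurableSet (Kᶜ : Set (Euc N)) := hKcl.measurableSet.compl
  obtain ⟨ρ₀, hρ₀⟩ := h1.cpt.isBounded.subset_closedBall 0
  set ρ : ℝ := max ρ₀ 0 with hρdef
  clear_value ρ
  have hρK : ∀ y ∈ K, ‖y‖ ≤ ρ := by
    intro y hy
    have h := hρ₀ hy
    rw [Metric.mem_closedBall, dist_zero_right] at h
    rw [hρdef]
    exact h.trans (le_max_left _ _)
  have hρ0 : (0:ℝ) ≤ ρ := by rw [hρdef]; exact le_max_right _ _
  obtain ⟨R₀, hR₀⟩ := h3.cptSupp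
  set R : ℝ := max R₀ 0 with hRdef
  clear_value R
  have hR0 : (0:ℝ) ≤ R := by rw [hRdef]; exact le_max_right _ _
  have hJzero : ∀ r : ℝ, R < r → J r = 0 := by
    intro r hr
    by_contra hne
    have h := hR₀ (Function.mem_support.mpr hne)
    have : r ≤ R := by rw [hRdef]; exact h.2.trans (le_max_left _ _)
    linarith
  have hJnn := h3.nonneg
  set A₀ : ℝ := -(ρ + R + 1) with hA₀def
  clear_value A₀
  have habs_coord : ∀ x : Euc N, |coord1 hN x| ≤ ‖x‖ := fun x => abs_coord_le_norm x ⟨0, hN⟩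
  have hfar_norm : ∀ x : Euc N, coord1 hN x ≤ A₀ → ρ + R + 1 ≤ ‖x‖ := by
    intro x hx
    have h1' := habs_coord x
    have h2' : ρ + R + 1 ≤ |coord1 hN x| := by
      rw [abs_of_nonpos (by linarith : coord1 hN x ≤ 0)]
      linarith
    linarith
  have hmemΩ : ∀ x : Euc N, ρ < ‖x‖ → x ∈ (Kᶜ : Set (Euc N)) := by
    intro x hx hxK
    exact absurd (hρK x hxK) (not_le.mpr hx)
  have hfar_mem : ∀ x : Euc N, coord1 hN x ≤ A₀ → x ∈ (Kᶜ : Set (Euc N)) := fun x hx =>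
    hmemΩ x (by have := hfar_norm x hx; linarith)
  -- basic facts about u
  have hu01' : ∀ t : ℝ, ∀ x ∈ closure (Kᶜ : Set (Euc N)), u t x ∈ Icc (0:ℝ) 1 := fun t x hx =>
    ⟨(hu01 t x hx).1.le, (hu01 t x hx).2.le⟩
  have humono : ∀ x ∈ closure (Kᶜ : Set (Euc N)), Monotone (fun s => u s x) := fun x hx =>
    (strictMono_of_deriv_pos (fun t => hmono t x hx)).monotone
  -- J is integrable
  have hJint : Integrable (fun z : Euc N => J ‖z‖) := by
    by_contra hni
    have h := h3.unitMass
    rw [integral_undef hni] at h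
    exact absurd h (by norm_num)
  -- far from the obstacle, δ is Euclidean on the range of J
  have hfar_ker : ∀ x ∈ closure (Kᶜ : Set (Euc N)), coord1 hN x ≤ A₀ →
      ∀ y ∈ (Kᶜ : Set (Euc N)), J (δ x y) = J ‖x - y‖ := by
    intro x hx hxA y hy
    have hycl : y ∈ closure (Kᶜ : Set (Euc N)) := subset_closure hy
    have hxn : ρ + R + 1 ≤ ‖x‖ := hfar_norm x hxA
    by_cases hd : ‖x - y‖ ≤ R
    · have hseg : segment ℝ x y ⊆ closure (Kᶜ : Set (Euc N)) := by
        intro p hp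
        obtain ⟨a, b, ha, hb, hab, rfl⟩ := hp
        refine subset_closure (hmemΩ _ ?_)
        have hxy : a • x + b • y - x = b • (y - x) := by
          have hba : a = 1 - b := by linarith
          rw [hba]; module
        have hpx : ‖a • x + b • y - x‖ ≤ R := by
          rw [hxy, norm_smul, Real.norm_eq_abs, abs_of_nonneg hb, norm_sub_rev]
          calc b * ‖x - y‖ ≤ 1 * R :=
                mul_le_mul (by linarith) hd (norm_nonneg _) one_pos.le
            _ = R := one_mul R
        have h5 := norm_sub_norm_le x (a • x + b • y)
        rw [norm_sub_rev] at h5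
        linarith
      rw [h1.quasi.eq_of_segment x hx y hycl hseg]
    · push_neg at hd
      have h2' : R < δ x y := lt_of_lt_of_le hd (h1.quasi.ge_eucl x hx y hycl)
      rw [hJzero _ h2', hJzero _ hd]
  -- integral of the translated kernel over Ω is 1
  have hfar_int : ∀ x : Euc N, coord1 hN x ≤ A₀ →
      IntegrableOn (fun y => J ‖x - y‖) (Kᶜ : Set (Euc N)) ∧
        (∫ y in (Kᶜ : Set (Euc N)), J ‖x - y‖) = 1 := by
    intro x hxA
    have hint : Integrable (fun y : Euc N => J ‖x - y‖) := hJint.comp_sub_left x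
    have hzero : ∀ y ∉ (Kᶜ : Set (Euc N)), J ‖x - y‖ = 0 := by
      intro y hy
      have hyK : y ∈ K := not_not.mp hy
      have h1' := hρK y hyK
      have h2' := norm_sub_norm_le x y
      have h3' := hfar_norm x hxA
      exact hJzero _ (by linarith)
    exact ⟨hint.integrableOn, by
      rw [setIntegral_eq_integral_of_forall_compl_eq_zero hzero,
        integral_sub_left_eq_self (fun z => J ‖z‖) volume x, h3.unitMass]⟩
  -- bound on f
  have hfc : ContinuousOn f (Icc (0:ℝ) 1) := fun s hs =>
    ((h2.hasDeriv s hs).continuousAt).continuousWithinAt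
  obtain ⟨Mf₀, hMf₀⟩ := (isCompact_Icc : IsCompact (Icc (0:ℝ) 1)).exists_bound_of_continuousOn hfc
  set Mf : ℝ := max Mf₀ 0 with hMfdef
  clear_value Mf
  have hMf : ∀ v ∈ Icc (0:ℝ) 1, |f v| ≤ Mf := fun v hv => by
    rw [hMfdef]; exact (hMf₀ v hv).trans (le_max_left _ _)
  have hMf0 : (0:ℝ) ≤ Mf := by rw [hMfdef]; exact le_max_right _ _
  set Λ : ℝ := 1 + Mf with hΛdef
  clear_value Λ
  have hΛ1 : (1:ℝ) ≤ Λ := by rw [hΛdef]; linarith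
  have hΛ0 : (0:ℝ) < Λ := by linarith
  -- rewriting the nonlocal operator at far-left points
  have hnl_rw : ∀ x ∈ closure (Kᶜ : Set (Euc N)), coord1 hN x ≤ A₀ → ∀ s : ℝ,
      nlOp Kᶜ J δ (u s) x = ∫ y in (Kᶜ : Set (Euc N)), J ‖x - y‖ * (u s y - u s x) := by
    intro x hx hxA s
    simp only [nlOp]
    exact setIntegral_congr_fun hΩmeas (fun y hy => by rw [hfar_ker x hx hxA y hy])
  have hnl_bound : ∀ x ∈ closure (Kᶜ : Set (Euc N)), coord1 hN x ≤ A₀ → ∀ s : ℝ,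
      |nlOp Kᶜ J δ (u s) x| ≤ 1 := by
    intro x hx hxA s
    rw [hnl_rw x hx hxA s, ← Real.norm_eq_abs]
    have hb : ∀ᵐ y ∂(volume.restrict (Kᶜ : Set (Euc N))),
        ‖J ‖x - y‖ * (u s y - u s x)‖ ≤ J ‖x - y‖ := by
      rw [ae_restrict_iff' hΩmeas]
      refine ae_of_all _ fun y hy => ?_
      have h1' := hu01' s y (subset_closure hy)
      have h2' := hu01' s x hx
      rw [norm_mul, Real.norm_eq_abs, Real.norm_eq_abs, abs_of_nonneg (hJnn _)]
      have habs1 : |u s y - u s x| ≤ 1 := by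
        rw [abs_le]
        constructor
        · linarith [h1'.1, h2'.2]
        · linarith [h1'.2, h2'.1]
      calc J ‖x - y‖ * |u s y - u s x| ≤ J ‖x - y‖ * 1 :=
            mul_le_mul_of_nonneg_left habs1 (hJnn _)
        _ = J ‖x - y‖ := mul_one _
    calc ‖∫ y in (Kᶜ : Set (Euc N)), J ‖x - y‖ * (u s y - u s x)‖
        ≤ ∫ y in (Kᶜ : Set (Euc N)), ‖J ‖x - y‖ * (u s y - u s x)‖ :=
          norm_integral_le_integral_norm _
      _ ≤ ∫ y in (Kᶜ : Set (Euc N)), J ‖x - y‖ :=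
          integral_mono_of_nonneg (ae_of_all _ fun y => norm_nonneg _) (hfar_int x hxA).1 hb
      _ = 1 := (hfar_int x hxA).2
  -- uniform Lipschitz bound in time at far-left points
  have hLip : ∀ x ∈ closure (Kᶜ : Set (Euc N)), coord1 hN x ≤ A₀ → ∀ s t : ℝ,
      |u t x - u s x| ≤ Λ * |t - s| := by
    intro x hx hxA s t
    have hb : ∀ r : ℝ, ‖nlOp Kᶜ J δ (u r) x + f (u r x)‖ ≤ Λ := by
      intro r
      rw [Real.norm_eq_abs, hΛdef]
      calc |nlOp Kᶜ J δ (u r) x + f (u r x)|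
          ≤ |nlOp Kᶜ J δ (u r) x| + |f (u r x)| := abs_add_le _ _
        _ ≤ 1 + Mf := add_le_add (hnl_bound x hx hxA r) (hMf _ (hu01' r x hx))
    have key := Convex.norm_image_sub_le_of_norm_hasDerivWithin_le
      (f := fun q => u q x) (f' := fun r => nlOp Kᶜ J δ (u r) x + f (u r x)) (s := univ)
      (fun r _ => (hu r x hx).hasDerivWithinAt) (fun r _ => hb r) convex_univ
      (mem_univ s) (mem_univ t)
    simpa [Real.norm_eq_abs] using key
  -- interface for the sliding sup S and the uniform limsup m
  have hwit : ∀ n : ℕ, ∃ x : Euc N, x ∈ closure (Kᶜ : Set (Euc N)) ∧ coord1 hN x ≤ A₀ - n := by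
    intro n
    have hco : coord1 hN (withFirst N (A₀ - n) 0) = A₀ - n := by simp [coord1, withFirst]
    refine ⟨withFirst N (A₀ - n) 0, subset_closure (hfar_mem _ ?_), by rw [hco]⟩
    rw [hco]
    have : (0:ℝ) ≤ n := Nat.cast_nonneg n
    linarith
  have hSbdd : ∀ t : ℝ, ∀ n : ℕ, BddAbove (u t '' {x | x ∈ closure (Kᶜ : Set (Euc N)) ∧ coord1 hN x ≤ A₀ - n}) := by
    intro t n
    refine ⟨1, ?_⟩
    rintro v ⟨z, hz, rfl⟩
    exact (hu01 t z hz.1).2.le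
  have hSub : ∀ (t : ℝ) (n : ℕ), ∀ x, x ∈ closure (Kᶜ : Set (Euc N)) → coord1 hN x ≤ A₀ - n →
      u t x ≤ auxS hN Kᶜ u A₀ t n := by
    intro t n x h1' h2'
    exact le_csSup (hSbdd t n) ⟨x, ⟨h1', h2'⟩, rfl⟩
  have hSle : ∀ (t : ℝ) (n : ℕ) (b : ℝ),
      (∀ x, x ∈ closure (Kᶜ : Set (Euc N)) → coord1 hN x ≤ A₀ - n → u t x ≤ b) →
      auxS hN Kᶜ u A₀ t n ≤ b := by
    intro t n b hball
    apply csSup_le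
    · obtain ⟨x, hx1, hx2⟩ := hwit n
      exact ⟨u t x, ⟨x, ⟨hx1, hx2⟩, rfl⟩⟩
    · rintro v ⟨z, hz, rfl⟩
      exact hball z hz.1 hz.2
  have hSlt : ∀ (t : ℝ) (n : ℕ) (b : ℝ), b < auxS hN Kᶜ u A₀ t n →
      ∃ x, x ∈ closure (Kᶜ : Set (Euc N)) ∧ coord1 hN x ≤ A₀ - n ∧ b < u t x := by
    intro t n b hb
    have hne : (u t '' {x | x ∈ closure (Kᶜ : Set (Euc N)) ∧ coord1 hN x ≤ A₀ - n}).Nonempty := by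
      obtain ⟨x, hx1, hx2⟩ := hwit n
      exact ⟨u t x, ⟨x, ⟨hx1, hx2⟩, rfl⟩⟩
    obtain ⟨v, ⟨z, hz, rfl⟩, hbv⟩ := exists_lt_of_lt_csSup hne hb
    exact ⟨z, hz.1, hz.2, hbv⟩
  have hS01 : ∀ (t : ℝ) (n : ℕ), 0 ≤ auxS hN Kᶜ u A₀ t n ∧ auxS hN Kᶜ u A₀ t n ≤ 1 := by
    intro t n
    constructor
    · obtain ⟨x, hx1, hx2⟩ := hwit n
      exact le_trans (hu01 t x hx1).1.le (hSub t n x hx1 hx2)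
    · exact hSle t n 1 (fun x h1' _ => (hu01 t x h1').2.le)
  have hmbdd : ∀ t : ℝ, BddBelow (range (fun n : ℕ => auxS hN Kᶜ u A₀ t n)) := by
    intro t
    refine ⟨0, ?_⟩
    rintro v ⟨n, rfl⟩
    exact (hS01 t n).1
  have hmleS : ∀ (t : ℝ) (n : ℕ), auxm hN Kᶜ u A₀ t ≤ auxS hN Kᶜ u A₀ t n := fun t n =>
    ciInf_le (hmbdd t) n
  have hm0 : ∀ t : ℝ, 0 ≤ auxm hN Kᶜ u A₀ t := fun t => le_ciInf fun n => (hS01 t n).1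
  have hSexists : ∀ (t : ℝ) (a : ℝ), auxm hN Kᶜ u A₀ t < a → ∃ n : ℕ, auxS hN Kᶜ u A₀ t n < a :=
    fun t a hlt => exists_lt_of_ciInf_lt hlt
  have hSLip : ∀ (n : ℕ) (s t : ℝ), auxS hN Kᶜ u A₀ t n ≤ auxS hN Kᶜ u A₀ s n + Λ * |t - s| := by
    intro n s t
    apply hSle
    intro x hx1 hx2
    have hxA : coord1 hN x ≤ A₀ := by
      have : (0:ℝ) ≤ n := Nat.cast_nonneg n
      linarith
    have h1' := (abs_le.mp (hLip x hx1 hxA s t)).2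
    have h2' := hSub s n x hx1 hx2
    linarith
  have hmLip : ∀ s t : ℝ, auxm hN Kᶜ u A₀ t ≤ auxm hN Kᶜ u A₀ s + Λ * |t - s| := by
    intro s t
    have h1' : ∀ n : ℕ, auxm hN Kᶜ u A₀ t - Λ * |t - s| ≤ auxS hN Kᶜ u A₀ s n := by
      intro n
      have ha := hSLip n s t
      have hb := hmleS t n
      linarith
    have h2' : auxm hN Kᶜ u A₀ t - Λ * |t - s| ≤ auxm hN Kᶜ u A₀ s := le_ciInf h1'
    linarith
  have hmcont : Continuous (fun t => auxm hN Kᶜ u A₀ t) := by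
    refine LipschitzWith.continuous (K := ⟨Λ, hΛ0.le⟩) (LipschitzWith.of_dist_le_mul fun a b => ?_)
    rw [Real.dist_eq, Real.dist_eq]
    change |_| ≤ Λ * |a - b|
    rw [abs_le]
    have hab := hmLip b a
    have hba := hmLip a b
    rw [abs_sub_comm b a] at hba
    constructor <;> linarith
  have hmmono : Monotone (fun t => auxm hN Kᶜ u A₀ t) := by
    intro s t hst
    refine le_ciInf fun n => le_trans (hmleS s n) ?_
    exact hSle s n _ (fun x h1' h2' => le_trans (humono x h1' hst) (hSub t n x h1' h2'))
  -- m is small at very negative times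
  have hstart : ∀ β : ℝ, 0 < β → ∃ T : ℝ, auxm hN Kᶜ u A₀ T ≤ β / 2 := by
    intro β hβ
    obtain ⟨T, hT⟩ := hulim (β/4) (by positivity)
    have hφ : ∀ᶠ z in atBot, φ z < β/4 := h4.lim0.eventually (Iio_mem_nhds (by positivity))
    obtain ⟨z₀, hz₀⟩ := eventually_atBot.mp hφ
    obtain ⟨n, hn⟩ := exists_nat_ge (A₀ + c * T - z₀)
    refine ⟨T, le_trans (hmleS T n) ?_⟩
    apply hSle
    intro x hx1 hx2
    have h1' := hT T le_rfl x hx1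
    have h2' : φ (coord1 hN x + c * T) < β/4 := hz₀ _ (by linarith)
    have h3' := (abs_le.mp h1').2
    linarith
  -- the key differential inequality for the nonlocal operator at far-left points
  have hkey : ∀ x ∈ closure (Kᶜ : Set (Euc N)), ∀ A₁ B : ℝ, A₁ ≤ A₀ → coord1 hN x ≤ A₁ - R →
      ∀ s : ℝ, (∀ y, y ∈ closure (Kᶜ : Set (Euc N)) → coord1 hN y ≤ A₁ → u s y ≤ B) →
      nlOp Kᶜ J δ (u s) x ≤ B - u s x := by
    intro x hx A₁ B hA₁ hxA s hB
    have hxA₀ : coord1 hN x ≤ A₀ := by linarith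
    have hBx : u s x ≤ B := hB x hx (by linarith)
    rw [hnl_rw x hx hxA₀ s]
    have hGint : IntegrableOn (fun y => J ‖x - y‖ * (B - u s x)) (Kᶜ : Set (Euc N)) :=
      (hfar_int x hxA₀).1.mul_const _
    have hGval : (∫ y in (Kᶜ : Set (Euc N)), J ‖x - y‖ * (B - u s x)) = B - u s x := by
      rw [integral_mul_const, (hfar_int x hxA₀).2, one_mul]
    have hpt : ∀ y ∈ (Kᶜ : Set (Euc N)),
        J ‖x - y‖ * (u s y - u s x) ≤ J ‖x - y‖ * (B - u s x) := by
      intro y hy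
      rcases eq_or_lt_of_le (hJnn ‖x - y‖) with h0 | h0
      · rw [← h0]; simp
      · have hsupp : ‖x - y‖ ≤ R := by
          by_contra hc
          exact absurd (hJzero _ (not_le.mp hc)) (ne_of_gt h0)
        have hcy : coord1 hN y - coord1 hN x ≤ ‖x - y‖ := by
          have h5 := abs_coord_le_norm (x - y) ⟨0, hN⟩
          have h6 : (x - y) ⟨0, hN⟩ = coord1 hN x - coord1 hN y := by simp [coord1]
          rw [h6] at h5
          have := (abs_le.mp h5).1
          linarith
        have hy1 : coord1 hN y ≤ A₁ := by linarith
        have := hB y (subset_closure hy) hy1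
        exact mul_le_mul_of_nonneg_left (by linarith) (hJnn _)
    by_cases hF : IntegrableOn (fun y => J ‖x - y‖ * (u s y - u s x)) (Kᶜ : Set (Euc N))
    · exact le_trans (setIntegral_mono_on hF hGint hΩmeas hpt) (le_of_eq hGval)
    · rw [integral_undef hF]
      linarith
  -- the main claim: m never exceeds any level β ∈ (0, θ)
  have hclaim : ∀ β : ℝ, 0 < β → β < θ → ∀ t₀ : ℝ, auxm hN Kᶜ u A₀ t₀ ≤ β := by
    intro β hβ0 hβθ t₀
    by_contra hcon
    push_neg at hcon
    have hθ1 := h2.θ_mem.2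
    have hβIcc : β ∈ Icc (0:ℝ) 1 := ⟨hβ0.le, by linarith⟩
    have hfβ : f β < 0 := h2.neg_on β ⟨hβ0, hβθ⟩
    set γ : ℝ := -f β / 2 with hγdef
    clear_value γ
    have hγ0 : 0 < γ := by rw [hγdef]; linarith
    have hγΛ : γ ≤ Λ := by
      have h5 := hMf β hβIcc
      rw [abs_of_nonpos hfβ.le] at h5
      rw [hγdef, hΛdef]
      linarith
    have hfcβ : ContinuousAt f β := (h2.hasDeriv β hβIcc).continuousAt
    obtain ⟨ε₁, hε₁0, hball⟩ := Metric.mem_nhds_iff.mp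
      (hfcβ (Iio_mem_nhds (show f β < -γ by rw [hγdef]; linarith)))
    have hη₁0 : 0 < ε₁ / 2 := by linarith
    have hη₁ : ∀ v : ℝ, |v - β| ≤ ε₁ / 2 → f v ≤ -γ := by
      intro v hv
      have hvmem : v ∈ Metric.ball β ε₁ := by
        rw [Metric.mem_ball, Real.dist_eq]
        linarith
      exact (hball hvmem).le
    set η : ℝ := min (ε₁ / 2) (min (β/2) (min (γ/2) 1)) with hηdef
    clear_value η
    have hη0 : 0 < η := by
      rw [hηdef]
      exact lt_min hη₁0 (lt_min (by linarith) (lt_min (by linarith) one_pos))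
    have hηη₁ : η ≤ ε₁ / 2 := by rw [hηdef]; exact min_le_left _ _
    have hηβ : η ≤ β/2 := by
      rw [hηdef]; exact le_trans (min_le_right _ _) (min_le_left _ _)
    have hηγ : η ≤ γ/2 := by
      rw [hηdef]; exact le_trans (min_le_right _ _) (le_trans (min_le_right _ _) (min_le_left _ _))
    have hη1 : η ≤ 1 := by
      rw [hηdef]; exact le_trans (min_le_right _ _) (le_trans (min_le_right _ _) (min_le_right _ _))
    set h : ℝ := η / (2 * Λ) with hhdef
    clear_value h
    have hh0 : 0 < h := by rw [hhdef]; exact div_pos hη0 (by linarith)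
    have hΛh : Λ * h = η / 2 := by
      rw [hhdef]
      field_simp
    have hhhalf : h ≤ 1/2 := by
      rw [hhdef, div_le_iff₀ (by linarith : (0:ℝ) < 2 * Λ)]
      linarith
    set κ : ℝ := γ * h / 8 with hκdef
    clear_value κ
    have hκ0 : 0 < κ := by rw [hκdef]; exact div_pos (mul_pos hγ0 hh0) (by norm_num)
    have hκη : κ ≤ η / 8 := by
      have hγh' : γ * h ≤ Λ * h := mul_le_mul_of_nonneg_right hγΛ hh0.le
      rw [hκdef]
      linarith
    have h2κ : 2 * κ ≤ γ / 8 := by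
      have hγh' : γ * h ≤ γ * (1/2) := mul_le_mul_of_nonneg_left hhhalf hγ0.le
      rw [hκdef]
      linarith
    obtain ⟨T, hT⟩ := hstart β hβ0
    have hTt₀ : T ≤ t₀ := by
      by_contra hc
      have := hmmono (le_of_not_ge hc)
      simp only at this
      linarith
    set E : Set ℝ := {s | s ∈ Icc T t₀ ∧ β ≤ auxm hN Kᶜ u A₀ s} with hEdef
    clear_value E
    have hEmem : ∀ s : ℝ, s ∈ E ↔ (s ∈ Icc T t₀ ∧ β ≤ auxm hN Kᶜ u A₀ s) := by
      intro s
      rw [hEdef]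
      exact Iff.rfl
    have hEne : E.Nonempty := ⟨t₀, (hEmem t₀).mpr ⟨⟨hTt₀, le_rfl⟩, hcon.le⟩⟩
    have hEclosed : IsClosed E := by
      have hEeq : E = Icc T t₀ ∩ {s | β ≤ auxm hN Kᶜ u A₀ s} := by
        rw [hEdef]
        rfl
      rw [hEeq]
      exact isClosed_Icc.inter (isClosed_le continuous_const hmcont)
    have hEbdd : BddBelow E := ⟨T, fun s hs => ((hEmem s).mp hs).1.1⟩
    set τ : ℝ := sInf E with hτdef
    clear_value τ
    have hτE : τ ∈ Icc T t₀ ∧ β ≤ auxm hN Kᶜ u A₀ τ := by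
      rw [← hEmem τ, hτdef]
      exact hEclosed.csInf_mem hEne hEbdd
    have hτT : T ≤ τ := hτE.1.1
    have hmτ : β ≤ auxm hN Kᶜ u A₀ τ := hτE.2
    have hpre : ∀ s, T ≤ s → s < τ → auxm hN Kᶜ u A₀ s < β := by
      intro s hs1 hs2
      by_contra hc
      have hsE : s ∈ E := (hEmem s).mpr ⟨⟨hs1, le_trans hs2.le hτE.1.2⟩, le_of_not_gt hc⟩
      have := csInf_le hEbdd hsE
      rw [← hτdef] at this
      exact absurd this (not_le.mpr hs2)
    have hτh : T ≤ τ - h := by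
      have h1' := hmLip T τ
      rw [abs_of_nonneg (by linarith : (0:ℝ) ≤ τ - T)] at h1'
      have e1 : β/2 ≤ Λ * (τ - T) := by linarith
      have e2 : Λ * h ≤ β/4 := by linarith
      have e3 : Λ * h ≤ Λ * (τ - T) := by linarith
      have e4 : h ≤ τ - T := (mul_le_mul_iff_right₀ hΛ0).mp e3
      linarith
    have hmτh : auxm hN Kᶜ u A₀ (τ - h) < β := hpre _ hτh (by linarith)
    obtain ⟨n₁, hn₁⟩ := hSexists (τ - h) (auxm hN Kᶜ u A₀ (τ - h) + κ) (by linarith)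
    set B : ℝ := β + κ + Λ * h with hBdef
    clear_value B
    have hwin : ∀ y, y ∈ closure (Kᶜ : Set (Euc N)) → coord1 hN y ≤ A₀ - n₁ →
        ∀ r, τ - h ≤ r → r ≤ τ → u r y ≤ B := by
      intro y hy1 hy2 r hr1 hr2
      have hyA₀ : coord1 hN y ≤ A₀ := by
        have : (0:ℝ) ≤ n₁ := Nat.cast_nonneg n₁
        linarith
      have hL := (abs_le.mp (hLip y hy1 hyA₀ (τ - h) r)).2
      have habsr : |r - (τ - h)| ≤ h := by
        rw [abs_of_nonneg (by linarith)]
        linarith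
      have h3' : u r y - u (τ - h) y ≤ Λ * h :=
        le_trans hL (mul_le_mul_of_nonneg_left habsr hΛ0.le)
      have h4' := hSub (τ - h) n₁ y hy1 hy2
      rw [hBdef]
      linarith
    obtain ⟨nR, hnR⟩ := exists_nat_ge R
    have hβκS : β - κ < auxS hN Kᶜ u A₀ τ (n₁ + nR) :=
      lt_of_lt_of_le (by linarith) (hmleS τ (n₁ + nR))
    obtain ⟨x, hxcl, hxA₂, hux⟩ := hSlt τ (n₁ + nR) (β - κ) hβκS
    have hcastadd : ((n₁ + nR : ℕ) : ℝ) = (n₁ : ℝ) + (nR : ℝ) := by push_cast; ring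
    have hxA₁ : coord1 hN x ≤ A₀ - n₁ := by
      rw [hcastadd] at hxA₂
      have : (0:ℝ) ≤ nR := Nat.cast_nonneg nR
      linarith
    have hxA₀' : coord1 hN x ≤ A₀ := by
      have : (0:ℝ) ≤ n₁ := Nat.cast_nonneg n₁
      linarith
    have hux_up : ∀ r, τ - h ≤ r → r ≤ τ → u r x ≤ B := fun r h1' h2' =>
      hwin x hxcl hxA₁ r h1' h2'
    have hux_lo : ∀ r, τ - h ≤ r → r ≤ τ → β - κ - Λ * h ≤ u r x := by
      intro r h1' h2'
      have hL := (abs_le.mp (hLip x hxcl hxA₀' r τ)).2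
      have habsr : |τ - r| ≤ h := by
        rw [abs_of_nonneg (by linarith)]
        linarith
      have h3' : u τ x - u r x ≤ Λ * h :=
        le_trans hL (mul_le_mul_of_nonneg_left habsr hΛ0.le)
      linarith
    have hderiv_le : ∀ r, τ - h ≤ r → r ≤ τ →
        nlOp Kᶜ J δ (u r) x + f (u r x) ≤ -(γ/4) := by
      intro r h1' h2'
      have hnl := hkey x hxcl (A₀ - n₁) B (by
          have : (0:ℝ) ≤ n₁ := Nat.cast_nonneg n₁
          linarith)
        (by
          rw [hcastadd] at hxA₂
          linarith)
        r (fun y hy1 hy2 => hwin y hy1 hy2 r h1' h2')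
      have hflo := hux_lo r h1' h2'
      have hfup := hux_up r h1' h2'
      have hfv : f (u r x) ≤ -γ := by
        apply hη₁
        rw [abs_le]
        constructor
        · rw [hBdef] at hfup
          linarith
        · rw [hBdef] at hfup
          linarith
      rw [hBdef] at hnl
      linarith
    have hanti : AntitoneOn (fun r => u r x + (γ/4) * r) (Icc (τ - h) τ) := by
      apply antitoneOn_of_deriv_nonpos (convex_Icc _ _)
      · have hct : Continuous (fun r => u r x) :=
          continuous_iff_continuousAt.mpr fun r => (hu r x hxcl).continuousAt
        exact (hct.add (continuous_const.mul continuous_id)).continuousOn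
      · intro r _
        exact ((hu r x hxcl).add ((hasDerivAt_id r).const_mul (γ/4))).differentiableAt.differentiableWithinAt
      · intro r hr
        rw [interior_Icc] at hr
        have hd : HasDerivAt (fun q => u q x + (γ/4) * q)
            ((nlOp Kᶜ J δ (u r) x + f (u r x)) + (γ/4) * 1) r :=
          (hu r x hxcl).add ((hasDerivAt_id r).const_mul (γ/4))
        rw [hd.deriv]
        have := hderiv_le r hr.1.le hr.2.le
        linarith
    have hfin := hanti (left_mem_Icc.mpr (by linarith)) (right_mem_Icc.mpr (by linarith))
      (by linarith)
    simp only at hfin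
    have hinit : u (τ - h) x ≤ auxm hN Kᶜ u A₀ (τ - h) + κ :=
      le_trans (hSub (τ - h) n₁ x hxcl hxA₁) hn₁.le
    have hγh : (γ/4) * h = 2 * κ := by rw [hκdef]; ring
    have hring : (γ/4) * τ - (γ/4) * (τ - h) = (γ/4) * h := by ring
    linarith
  -- m vanishes identically
  have hmzero : ∀ t : ℝ, auxm hN Kᶜ u A₀ t = 0 := by
    intro t
    refine le_antisymm ?_ (hm0 t)
    by_contra hc
    push_neg at hc
    have hθ0 := h2.θ_mem.1
    have h1' := hclaim (min (auxm hN Kᶜ u A₀ t / 2) (θ / 2))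
      (lt_min (by linarith) (by linarith))
      (lt_of_le_of_lt (min_le_right _ _) (by linarith)) t
    have h2' := min_le_left (auxm hN Kᶜ u A₀ t / 2) (θ / 2)
    linarith
  -- conclusion
  intro t x'
  have hwf : ∀ s : ℝ, coord1 hN (withFirst N s x') = s := fun s => by simp [coord1, withFirst]
  constructor
  · rw [Metric.tendsto_nhds]
    intro ε hε
    rw [eventually_atBot]
    obtain ⟨n, hn⟩ := hSexists t (ε/2) (by rw [hmzero t]; positivity)
    refine ⟨A₀ - n, fun s hs => ?_⟩
    have hxcl : withFirst N s x' ∈ closure (Kᶜ : Set (Euc N)) := by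
      refine subset_closure (hfar_mem _ ?_)
      rw [hwf]
      have : (0:ℝ) ≤ n := Nat.cast_nonneg n
      linarith
    have h1' := hSub t n _ hxcl (by rw [hwf]; exact hs)
    have h2' := (hu01 t _ hxcl).1
    rw [Real.dist_eq, sub_zero, abs_of_pos h2']
    linarith
  · rw [Metric.tendsto_nhds]
    intro ε hε
    rw [eventually_atTop]
    obtain ⟨T₁, hT₁⟩ := hulim (ε/4) (by positivity)
    have hφ : ∀ᶠ z in atTop, 1 - ε/4 < φ z := h4.lim1.eventually (Ioi_mem_nhds (by linarith))
    obtain ⟨z₁, hz₁⟩ := eventually_atTop.mp hφ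
    refine ⟨max (z₁ - c * min t T₁) (ρ + 1), fun s hs => ?_⟩
    have hsρ : ρ + 1 ≤ s := le_trans (le_max_right _ _) hs
    have hxcl : withFirst N s x' ∈ closure (Kᶜ : Set (Euc N)) := by
      refine subset_closure (hmemΩ _ ?_)
      have h5 := habs_coord (withFirst N s x')
      rw [hwf] at h5
      have h6 : s ≤ |s| := le_abs_self s
      linarith
    have h1' := hT₁ (min t T₁) (min_le_right _ _) _ hxcl
    rw [hwf] at h1'
    have h2' : 1 - ε/4 < φ (s + c * min t T₁) := by
      apply hz₁
      have := le_trans (le_max_left (z₁ - c * min t T₁) (ρ + 1)) hs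
      linarith
    have h3' : u (min t T₁) (withFirst N s x') ≤ u t (withFirst N s x') :=
      humono _ hxcl (min_le_left _ _)
    have h4' := (hu01 t _ hxcl).2
    rw [Real.dist_eq, abs_of_nonpos (by linarith)]
    have h5' := (abs_le.mp h1').1
    linarith
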